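/- arXiv:2001.05202 — 7 statements merged into one kernel-verified Lean document; each statement's English description precedes it below -/
import Mathlib

section
/- The Bregman distance D_h satisfies the generalized translation invariant property with exponent γ restricted to θ ∈ [0,1] (i.e., D_h(u + θ(v-w), u) ≤ θ^γ D_h(v,w) for all u,v,w and θ ∈ [0,1]) if and only if it satisfies the triangle scaling property (i.e., D_h((1-θ)u + θv, (1-θ)u + θw) ≤ θ^γ D_h(v,w) for all u,v,w and θ ∈ [0,1]). -/
noncomputable def breg {N : ℕ} (h : EuclideanSpace ℝ (Fin N) → ℝ)
    (h' : EuclideanSpace ℝ (Fin N) → EuclideanSpace ℝ (Fin N))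
    (x y : EuclideanSpace ℝ (Fin N)) : ℝ :=
  h x - h y - (inner ℝ (h' y) (x - y) : ℝ)

/-- The generalized translation invariant property restricted to `θ ∈ [0,1]`
is equivalent to the triangle scaling property. -/
theorem gti_iff_tsp (N : ℕ) (γ : ℝ) (hγ : 0 < γ)
    (h : EuclideanSpace ℝ (Fin N) → ℝ)
    (h' : EuclideanSpace ℝ (Fin N) → EuclideanSpace ℝ (Fin N))
    (hconv : ConvexOn ℝ Set.univ h)
    (hgrad : ∀ x, HasGradientAt h (h' x) x) :
    (∀ (u v w : EuclideanSpace ℝ (Fin N)) (θ : ℝ), θ ∈ Set.Icc (0:ℝ) 1 →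
        breg h h' (u + θ • (v - w)) u ≤ θ ^ γ * breg h h' v w) ↔
      (∀ (u v w : EuclideanSpace ℝ (Fin N)) (θ : ℝ), θ ∈ Set.Icc (0:ℝ) 1 →
        breg h h' ((1 - θ) • u + θ • v) ((1 - θ) • u + θ • w) ≤ θ ^ γ * breg h h' v w) := by
  have hcont : Continuous h := by
    rw [continuous_iff_continuousAt]
    exact fun x => (hgrad x).differentiableAt.continuousAt
  constructor
  · intro H u v w θ hθ
    have key : (1 - θ) • u + θ • v = ((1 - θ) • u + θ • w) + θ • (v - w) := by module
    rw [key]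
    exact H ((1 - θ) • u + θ • w) v w θ hθ
  · intro H u v w θ hθ
    obtain ⟨hθ0, hθ1⟩ := hθ
    rcases lt_or_eq_of_le hθ1 with hlt | heq
    · -- θ < 1 : substitute u' = (1-θ)⁻¹ • (u - θ • w)
      have h1 : (1 : ℝ) - θ ≠ 0 := by linarith
      set u' := (1 - θ)⁻¹ • (u - θ • w) with hu'
      have hcancel : (1 - θ) • u' = u - θ • w := by
        rw [hu', smul_smul, mul_inv_cancel₀ h1, one_smul]
      have e1 : (1 - θ) • u' + θ • v = u + θ • (v - w) := by
        rw [hcancel]; module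
      have e2 : (1 - θ) • u' + θ • w = u := by
        rw [hcancel]; module
      have := H u' v w θ ⟨hθ0, hθ1⟩
      rwa [e1, e2] at this
    · -- θ = 1 : limit argument
      subst heq
      -- the inequality holds for all t ∈ [0,1)
      have hlt : ∀ t : ℝ, t ∈ Set.Ico (0:ℝ) 1 →
          breg h h' (u + t • (v - w)) u ≤ t ^ γ * breg h h' v w := by
        intro t ht
        have h1 : (1 : ℝ) - t ≠ 0 := by have := ht.2; linarith
        set u' := (1 - t)⁻¹ • (u - t • w) with hu'
        have hcancel : (1 - t) • u' = u - t • w := by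
          rw [hu', smul_smul, mul_inv_cancel₀ h1, one_smul]
        have e1 : (1 - t) • u' + t • v = u + t • (v - w) := by
          rw [hcancel]; module
        have e2 : (1 - t) • u' + t • w = u := by
          rw [hcancel]; module
        have := H u' v w t ⟨ht.1, le_of_lt ht.2⟩
        rwa [e1, e2] at this
      -- continuity of both sides in t at t = 1
      have hbregeq : ∀ t : ℝ, breg h h' (u + t • (v - w)) u
          = h (u + t • (v - w)) - h u - t * (inner ℝ (h' u) (v - w) : ℝ) := by
        intro t
        simp [breg, add_sub_cancel_left, real_inner_smul_right]
      have hc1 : ContinuousAt (fun t : ℝ => breg h h' (u + t • (v - w)) u) 1 := by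
        simp only [hbregeq]
        apply ContinuousAt.sub
        apply ContinuousAt.sub
        · exact (hcont.comp (by continuity)).continuousAt
        · exact continuousAt_const
        · exact (continuous_id.mul continuous_const).continuousAt
      have hc2 : ContinuousAt (fun t : ℝ => t ^ γ * breg h h' v w) 1 := by
        apply ContinuousAt.mul _ continuousAt_const
        exact Real.continuousAt_rpow_const 1 γ (Or.inl one_ne_zero)
      have hne : (nhdsWithin (1:ℝ) (Set.Ico (0:ℝ) 1)).NeBot := by
        apply mem_closure_iff_nhdsWithin_neBot.mp
        rw [closure_Ico (by norm_num : (0:ℝ) ≠ 1)]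
        exact ⟨by norm_num, le_refl 1⟩
      have t1 := (hc1.continuousWithinAt (s := Set.Ico (0:ℝ) 1)).tendsto
      have t2 := (hc2.continuousWithinAt (s := Set.Ico (0:ℝ) 1)).tendsto
      exact le_of_tendsto_of_tendsto t1 t2 (Filter.eventually_inf_principal.mpr
        (Filter.Eventually.of_forall hlt))
end

section
/- The Itakura–Saito distance D_IS(x,y) = -log(x/y) + x/y - 1 on ℝ₊₊ is scale invariant: D_IS(θv, θw) = D_IS(v,w) for all θ > 0 and v, w > 0. Consequently, if γ > 0 then there exist u, v, w > 0 and θ ∈ (0,1) such that D_IS(u + θ(v-w), u) > θ^γ D_IS(v,w), i.e., D_IS does not satisfy the generalized translation invariant property with any γ > 0. -/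
noncomputable def dIS (x y : ℝ) : ℝ := -Real.log (x / y) + x / y - 1

/-- The Itakura–Saito distance is scale invariant, and consequently it fails the
generalized translation invariant property for every exponent `γ > 0`. -/
theorem is_scale_invariant_and_no_gti :
    (∀ θ v w : ℝ, 0 < θ → 0 < v → 0 < w → dIS (θ * v) (θ * w) = dIS v w) ∧
      ∀ γ : ℝ, 0 < γ →
        ∃ u v w θ : ℝ, 0 < u ∧ 0 < v ∧ 0 < w ∧ 0 < θ ∧ θ < 1 ∧
          0 < u + θ * (v - w) ∧
          θ ^ γ * dIS v w < dIS (u + θ * (v - w)) u := by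
  constructor
  · intro θ v w hθ hv hw
    have : θ * v / (θ * w) = v / w := by
      field_simp
    simp [dIS, this]
  · intro γ hγ
    refine ⟨1, 7/4, 7/2, 1/2, by norm_num, by norm_num, by norm_num, by norm_num,
      by norm_num, by norm_num, ?_⟩
    have h1 : (1:ℝ) + 1/2 * (7/4 - 7/2) = 1/8 := by norm_num
    have hlog2 : (0.6931471803 : ℝ) < Real.log 2 := Real.log_two_gt_d9
    have hlog2' : Real.log 2 < 0.6931471808 := Real.log_two_lt_d9
    have hd1 : dIS (7/4) (7/2) = Real.log 2 - 1/2 := by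
      have : (7/4 : ℝ) / (7/2) = 1/2 := by norm_num
      rw [dIS, this]
      rw [show (1/2 : ℝ) = 2⁻¹ by norm_num, Real.log_inv]
      ring
    have hd2 : dIS (1/8) 1 = 3 * Real.log 2 - 7/8 := by
      rw [dIS]
      rw [show (1/8 : ℝ)/1 = (2^3 : ℝ)⁻¹ by norm_num, Real.log_inv, Real.log_pow]
      push_cast
      ring
    have hpow : ((1:ℝ)/2) ^ γ < 1 :=
      Real.rpow_lt_one (by norm_num) (by norm_num) hγ
    have hpos : (0:ℝ) < (1/2 : ℝ) ^ γ := Real.rpow_pos_of_pos (by norm_num) γ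
    rw [h1, hd1, hd2]
    nlinarith [hpow, hpos, hlog2, hlog2']
end

section
/- Block coordinate descent lemma: let F = f + r with r convex and block separable, and suppose (f_i, h_i) is relatively smooth with constant L_i. If the i-th block of x⁺ equals T_i(x) = argmin_{u_i} ⟨∇_i f(x), u_i - x_i⟩ + (1/α) D_h(u_i, x_i) + r_i(u_i) and the other blocks are unchanged, then F(x⁺) ≤ F(x) - ((1+θ_i)/α - L_i)·D_h(T_i(x), x_i), where θ_i is the symmetry coefficient of h_i. In particular, F(x⁺) < F(x) holds whenever 0 < α < (1+θ_i)/L_i and T_i(x) ≠ x_i. -/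
open Set Filter Topology

variable {E : Type*} [NormedAddCommGroup E] [InnerProductSpace ℝ E] [CompleteSpace E]

lemma dir_hasDerivAt {h : E → ℝ} {g : E} {a : E} (hg : HasGradientAt h g a) (v : E) :
    HasDerivAt (fun t : ℝ => h (a + t • v)) (inner ℝ g v : ℝ) 0 := by
  have hf : HasFDerivAt h ((InnerProductSpace.toDual ℝ E) g) a :=
    hasGradientAt_iff_hasFDerivAt.mp hg
  have hc : HasDerivAt (fun t : ℝ => a + t • v) v 0 := by
    simpa using ((hasDerivAt_id (0:ℝ)).smul_const v).const_add a
  have := (show HasFDerivAt h ((InnerProductSpace.toDual ℝ E) g) (a + (0:ℝ) • v) by simpa using hf).comp_hasDerivAt (x := (0:ℝ)) hc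
  simpa using (by exact this : HasDerivAt (fun t : ℝ => h (a + t • v)) _ 0)

lemma le_deriv_of_slope {φ : ℝ → ℝ} {d c : ℝ} (hφ : HasDerivAt φ d 0)
    (hc : ∀ t : ℝ, 0 < t → t ≤ 1 → c * t ≤ φ t - φ 0) : c ≤ d := by
  have h1 : Tendsto (slope φ 0) (𝓝[>] (0:ℝ)) (𝓝 d) :=
    (hasDerivAt_iff_tendsto_slope.mp hφ).mono_left
      (nhdsWithin_mono _ fun t ht => ne_of_gt ht)
  refine ge_of_tendsto h1 ?_
  filter_upwards [Ioc_mem_nhdsGT_of_mem (by norm_num : (0:ℝ) ∈ Set.Ico 0 1)] with t ht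
  have h2 := hc t ht.1 ht.2
  rw [slope_def_field, sub_zero, le_div_iff₀ ht.1]
  linarith [h2]

lemma deriv_le_of_slope {φ : ℝ → ℝ} {d c : ℝ} (hφ : HasDerivAt φ d 0)
    (hc : ∀ t : ℝ, 0 < t → t ≤ 1 → φ t - φ 0 ≤ c * t) : d ≤ c := by
  have := le_deriv_of_slope (hφ.neg) (c := -c) (fun t h1 h2 => by
    have := hc t h1 h2; simp; linarith)
  linarith

lemma breg_nonneg' {h : E → ℝ} {G : E → E} (hconv : ConvexOn ℝ Set.univ h)
    (hg : ∀ y, HasGradientAt h (G y) y) (a b : E) :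
    (inner ℝ (G a) (b - a) : ℝ) ≤ h b - h a := by
  refine deriv_le_of_slope (dir_hasDerivAt (hg a) (b - a)) (fun t h1 h2 => ?_)
  have hx : a + t • (b - a) = (1 - t) • a + t • b := by module
  have := hconv.2 (Set.mem_univ a) (Set.mem_univ b) (by linarith : (0:ℝ) ≤ 1 - t)
    (le_of_lt h1) (by ring)
  rw [smul_eq_mul, smul_eq_mul] at this
  have h0 : a + (0:ℝ) • (b - a) = a := by module
  rw [hx, h0]
  nlinarith [this]

lemma breg_pos' {h : E → ℝ} {G : E → E} (hconv : StrictConvexOn ℝ Set.univ h)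
    (hg : ∀ y, HasGradientAt h (G y) y) {a b : E} (hab : b ≠ a) :
    0 < h b - h a - (inner ℝ (G a) (b - a) : ℝ) := by
  have key := breg_nonneg' hconv.convexOn hg a ((1/2 : ℝ) • a + (1/2 : ℝ) • b)
  have hmid := hconv.2 (Set.mem_univ a) (Set.mem_univ b) (Ne.symm hab)
    (by norm_num : (0:ℝ) < 1/2) (by norm_num : (0:ℝ) < 1/2) (by norm_num)
  rw [smul_eq_mul, smul_eq_mul] at hmid
  have hi : ((1/2 : ℝ) • a + (1/2 : ℝ) • b) - a = (1/2 : ℝ) • (b - a) := by module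
  rw [hi, real_inner_smul_right] at key
  linarith

lemma three_point' {h : E → ℝ} {G : E → E} {ri : E → ℝ} (g a T : E) {α : ℝ} (hα : 0 < α)
    (hconv : ConvexOn ℝ Set.univ ri)
    (hg : ∀ y, HasGradientAt h (G y) y)
    (hmin : ∀ u, (inner ℝ g (T - a) : ℝ) + (1/α) * (h T - h a - (inner ℝ (G a) (T - a) : ℝ)) + ri T ≤
      (inner ℝ g (u - a) : ℝ) + (1/α) * (h u - h a - (inner ℝ (G a) (u - a) : ℝ)) + ri u) :
    (inner ℝ g (T - a) : ℝ) + ri T +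
      (1/α) * ((h T - h a - (inner ℝ (G a) (T - a) : ℝ)) + (h a - h T - (inner ℝ (G T) (a - T) : ℝ)))
      ≤ ri a := by
  set A : ℝ := 1/α with hA
  have hApos : 0 < A := by positivity
  set G1 : ℝ := inner ℝ g (T - a) with hG1
  set G2 : ℝ := inner ℝ (G a) (T - a) with hG2
  set c : ℝ := G1 - A * G2 + ri T - ri a with hc
  have key : c ≤ A * (inner ℝ (G T) (a - T) : ℝ) := by
    have hd : HasDerivAt (fun t : ℝ => A * h (T + t • (a - T))) (A * (inner ℝ (G T) (a - T) : ℝ)) 0 :=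
      (dir_hasDerivAt (hg T) (a - T)).const_mul A
    refine le_deriv_of_slope hd (fun t h1 h2 => ?_)
    have hx : T + t • (a - T) = (1 - t) • T + t • a := by module
    have hrc := hconv.2 (Set.mem_univ T) (Set.mem_univ a) (by linarith : (0:ℝ) ≤ 1 - t)
      (le_of_lt h1) (by ring)
    rw [smul_eq_mul, smul_eq_mul] at hrc
    have hm := hmin ((1 - t) • T + t • a)
    have e1 : ((1 - t) • T + t • a) - a = (1 - t) • (T - a) := by module
    rw [e1, real_inner_smul_right, real_inner_smul_right] at hm
    have h0 : T + (0:ℝ) • (a - T) = T := by module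
    rw [hx, h0]
    nlinarith [hm, hrc]
  linarith [key]



/-- Block Bregman coordinate descent lemma (Lemma 3 of the paper): a single block
Bregman proximal update with stepsize α decreases F = f + Σⱼ rⱼ by at least
((1+θᵢ)/α - Lᵢ)·D_h(Tᵢ(x), xᵢ); in particular strict descent holds when
0 < α < (1+θᵢ)/Lᵢ and Tᵢ(x) ≠ xᵢ. -/
theorem block_bregman_descent (n : ℕ) (N : Fin n → ℕ)
    (f : (∀ j, EuclideanSpace ℝ (Fin (N j))) → ℝ)
    (r : ∀ j, EuclideanSpace ℝ (Fin (N j)) → ℝ)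
    (h : ∀ j, EuclideanSpace ℝ (Fin (N j)) → ℝ)
    (h' : ∀ j, EuclideanSpace ℝ (Fin (N j)) → EuclideanSpace ℝ (Fin (N j)))
    (L θ : Fin n → ℝ) (α : ℝ) (i : Fin n)
    (x : ∀ j, EuclideanSpace ℝ (Fin (N j)))
    (Ti : EuclideanSpace ℝ (Fin (N i)))
    (gradf : ∀ j, (∀ k, EuclideanSpace ℝ (Fin (N k))) → EuclideanSpace ℝ (Fin (N j)))
    (hr : ∀ j, ConvexOn ℝ Set.univ (r j))
    (hstrict : ∀ j, StrictConvexOn ℝ Set.univ (h j))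
    (hgrad : ∀ j y, HasGradientAt (h j) (h' j y) y)
    (hgradf : ∀ j (y : ∀ k, EuclideanSpace ℝ (Fin (N k))),
      HasGradientAt (fun u => f (Function.update y j u)) (gradf j y) (y j))
    (hL : ∀ j, 0 < L j)
    -- relative smoothness of (fᵢ, hᵢ) with constant Lᵢ (descent-lemma form)
    (hsmooth : ∀ u, f (Function.update x i u) ≤
      f x + (inner ℝ (gradf i x) (u - x i) : ℝ) + L i * breg (h i) (h' i) u (x i))
    -- θᵢ is a lower bound realizing the symmetry coefficient of hᵢ
    (hθ : ∀ j a b, θ j * breg (h j) (h' j) b a ≤ breg (h j) (h' j) a b)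
    (hα : 0 < α)
    -- Tᵢ minimizes the block Bregman proximal subproblem
    (hTi : ∀ u, (inner ℝ (gradf i x) (Ti - x i) : ℝ) + (1/α) * breg (h i) (h' i) Ti (x i) + r i Ti ≤
      (inner ℝ (gradf i x) (u - x i) : ℝ) + (1/α) * breg (h i) (h' i) u (x i) + r i u) :
    (f (Function.update x i Ti) + ∑ j, r j (Function.update x i Ti j) ≤
        f x + ∑ j, r j (x j) - ((1 + θ i) / α - L i) * breg (h i) (h' i) Ti (x i)) ∧
      (α < (1 + θ i) / L i → Ti ≠ x i →
        f (Function.update x i Ti) + ∑ j, r j (Function.update x i Ti j) <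
          f x + ∑ j, r j (x j)) := by
  set D : ℝ := breg (h i) (h' i) Ti (x i) with hD
  set Ds : ℝ := breg (h i) (h' i) (x i) Ti with hDs
  -- sums differ only at block i
  have hsum : ∑ j, r j (Function.update x i Ti j) = (∑ j, r j (x j)) + (r i Ti - r i (x i)) := by
    have e1 : ∀ j, r j (Function.update x i Ti j)
        = Function.update (fun j => r j (x j)) i (r i Ti) j := by
      intro j
      by_cases hj : j = i
      · subst hj; simp
      · simp [Function.update_of_ne hj]
    rw [Finset.sum_congr rfl (fun j _ => e1 j), Finset.sum_update_of_mem (Finset.mem_univ i),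
      ← Finset.add_sum_erase _ _ (Finset.mem_univ i)]
    simp [Finset.sdiff_singleton_eq_erase]
    ring
  -- three point inequality
  have hTi' := hTi
  simp only [breg] at hTi'
  have key3 := three_point' (h := h i) (G := h' i) (ri := r i) (gradf i x) (x i) Ti hα
    (hr i) (hgrad i) hTi'
  have eD : (1/α) * ((h i Ti - h i (x i) - (inner ℝ (h' i (x i)) (Ti - x i) : ℝ)) +
      (h i (x i) - h i Ti - (inner ℝ (h' i Ti) (x i - Ti) : ℝ))) = (1/α) * D + (1/α) * Ds := by
    rw [hD, hDs]; simp only [breg]; ring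
  rw [eD] at key3
  have hsm := hsmooth Ti
  have hθi : θ i * D ≤ Ds := hθ i (x i) Ti
  have hAnn : (0:ℝ) ≤ 1/α := by positivity
  have h5 : (1/α) * (θ i * D) ≤ (1/α) * Ds := mul_le_mul_of_nonneg_left hθi hAnn
  have hexp : ((1 + θ i)/α - L i) * D = (1/α) * D + (1/α) * (θ i * D) - L i * D := by ring
  have main : f (Function.update x i Ti) + ∑ j, r j (Function.update x i Ti j) ≤
      f x + ∑ j, r j (x j) - ((1 + θ i) / α - L i) * D := by
    rw [hsum]
    linarith [key3, hsm, h5, hexp]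
  refine ⟨main, fun hαθ hne => ?_⟩
  have hDpos : 0 < D := by
    rw [hD]; simp only [breg]
    exact breg_pos' (hstrict i) (hgrad i) hne
  have hcoef : 0 < (1 + θ i)/α - L i := by
    have h1 : α * L i < 1 + θ i := (lt_div_iff₀ (hL i)).mp hαθ
    have h2 : L i < (1 + θ i)/α := (lt_div_iff₀ hα).mpr (by linarith [mul_comm α (L i)])
    linarith
  have := mul_pos hcoef hDpos
  linarith [main]
end

section
/- A point x is a stationary point of F = f + r (i.e., 0 ∈ ∇f(x) + ∂r(x)) if and only if D_H(T(x), x) = 0, where T(x) = argmin_u ⟨∇f(x), u - x⟩ + D_H(u,x) + r(u) and H(x) = Σᵢ Lᵢhᵢ(xᵢ). -/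
section Aux

open Filter Topology

variable {N : ℕ}

-- directional slope limit
lemma slope_tendsto {E : Type*} [NormedAddCommGroup E] [InnerProductSpace ℝ E] [CompleteSpace E]
    (H : E → ℝ) (g x v : E) (hg : HasGradientAt H g x) :
    Tendsto (fun t : ℝ => (H (x + t • v) - H x) / t) (𝓝[>] (0:ℝ))
      (𝓝 ((inner ℝ g v : ℝ))) := by
  have hc : HasDerivAt (fun t : ℝ => x + t • v) v 0 := by
    simpa using ((hasDerivAt_id (0:ℝ)).smul_const v).const_add x
  have hcomp : HasDerivAt (fun t : ℝ => H (x + t • v)) ((inner ℝ g v : ℝ)) 0 := by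
    have hg' : HasFDerivAt H ((InnerProductSpace.toDual ℝ E) g) (x + (0:ℝ) • v) := by
      simpa using hg.hasFDerivAt
    have := hg'.comp_hasDerivAt 0 hc
    exact this
  have := hasDerivAt_iff_tendsto_slope.mp hcomp
  have h2 : Tendsto (slope (fun t : ℝ => H (x + t • v)) 0) (𝓝[>] (0:ℝ))
      (𝓝 ((inner ℝ g v : ℝ))) := this.mono_left (nhdsWithin_mono _ (by intro t ht; exact ne_of_gt ht))
  refine h2.congr (fun t => ?_)
  simp [slope_def_field, div_eq_inv_mul]



lemma convex_grad_ineq {E : Type*} [NormedAddCommGroup E] [InnerProductSpace ℝ E] [CompleteSpace E]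
    (H : E → ℝ) (g x : E) (hconv : ConvexOn ℝ Set.univ H) (hg : HasGradientAt H g x)
    (y : E) : (inner ℝ g (y - x) : ℝ) ≤ H y - H x := by
  have hlim := slope_tendsto H g x (y - x) hg
  refine le_of_tendsto hlim ?_
  filter_upwards [Ioo_mem_nhdsGT_of_mem (Set.left_mem_Ico.mpr one_pos)] with t ht
  have ht0 : (0:ℝ) < t := ht.1
  have ht1 : t < 1 := ht.2
  have hc := hconv.2 (Set.mem_univ x) (Set.mem_univ y) (by linarith : (0:ℝ) ≤ 1 - t)
    (le_of_lt ht0) (by ring)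
  have hx : x + t • (y - x) = (1 - t) • x + t • y := by
    rw [smul_sub]; module
  rw [div_le_iff₀ ht0]
  calc H (x + t • (y - x)) - H x ≤ (1 - t) * H x + t * H y - H x := by
        rw [hx]; simpa [smul_eq_mul] using hc
    _ = (H y - H x) * t := by ring

lemma strict_convex_grad_ineq {E : Type*} [NormedAddCommGroup E] [InnerProductSpace ℝ E]
    [CompleteSpace E]
    (H : E → ℝ) (g x : E) (hconv : StrictConvexOn ℝ Set.univ H) (hg : HasGradientAt H g x)
    (y : E) (hne : y ≠ x) : (inner ℝ g (y - x) : ℝ) < H y - H x := by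
  set m := (1/2 : ℝ) • x + (1/2 : ℝ) • y with hm
  have hmid : H m < (1/2) * H x + (1/2) * H y :=
    hconv.2 (Set.mem_univ x) (Set.mem_univ y) (Ne.symm hne) (by norm_num) (by norm_num) (by norm_num)
  have hA := convex_grad_ineq H g x hconv.convexOn hg m
  have hms : m - x = (1/2 : ℝ) • (y - x) := by rw [hm, smul_sub]; module
  rw [hms, real_inner_smul_right] at hA
  nlinarith [hA, hmid]

theorem stationary_iff_bregman_gap_zero' (N : ℕ)
    (f r H : EuclideanSpace ℝ (Fin N) → ℝ)
    (H' : EuclideanSpace ℝ (Fin N) → EuclideanSpace ℝ (Fin N))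
    (gf : EuclideanSpace ℝ (Fin N) → EuclideanSpace ℝ (Fin N))
    (hr : ConvexOn ℝ Set.univ r)
    (hHstrict : StrictConvexOn ℝ Set.univ H)
    (hHgrad : ∀ x, HasGradientAt H (H' x) x)
    (hfgrad : ∀ x, HasGradientAt f (gf x) x)
    (x Tx : EuclideanSpace ℝ (Fin N))
    (hT : ∀ u, (inner ℝ (gf x) (Tx - x) : ℝ) + (H Tx - H x - (inner ℝ (H' x) (Tx - x) : ℝ)) + r Tx ≤
      (inner ℝ (gf x) (u - x) : ℝ) + (H u - H x - (inner ℝ (H' x) (u - x) : ℝ)) + r u) :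
    (∃ v : EuclideanSpace ℝ (Fin N),
        (∀ y, r x + (inner ℝ v (y - x) : ℝ) ≤ r y) ∧ gf x + v = 0) ↔
      (H Tx - H x - (inner ℝ (H' x) (Tx - x) : ℝ)) = 0 := by
  have hnonneg : (0:ℝ) ≤ H Tx - H x - (inner ℝ (H' x) (Tx - x) : ℝ) := by
    have := convex_grad_ineq H (H' x) x hHstrict.convexOn (hHgrad x) Tx
    linarith
  constructor
  · rintro ⟨v, hsub, hv⟩
    have hv' : v = -gf x := eq_neg_of_add_eq_zero_right hv
    have key1 := hT x
    simp only [sub_self, inner_zero_right] at key1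
    have key2 := hsub Tx
    rw [hv', inner_neg_left] at key2
    linarith
  · intro h0
    have hTx : Tx = x := by
      by_contra hne
      have := strict_convex_grad_ineq H (H' x) x hHstrict (hHgrad x) Tx hne
      linarith
    refine ⟨-gf x, ?_, by simp⟩
    intro y
    set v := y - x with hvdef
    have key : ∀ t : ℝ, t ∈ Set.Ioo (0:ℝ) 1 →
        r x ≤ (inner ℝ (gf x) v : ℝ) + (H (x + t • v) - H x) / t - (inner ℝ (H' x) v : ℝ) + r y := by
      intro t ht
      have ht0 := ht.1
      have hu := hT (x + t • v)
      rw [hTx] at hu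
      simp only [sub_self, inner_zero_right] at hu
      have hsub1 : x + t • v - x = t • v := by abel
      rw [hsub1, real_inner_smul_right, real_inner_smul_right] at hu
      have hconvr := hr.2 (Set.mem_univ x) (Set.mem_univ y) (by linarith [ht.2] : (0:ℝ) ≤ 1 - t)
        (le_of_lt ht0) (by ring)
      have hx2 : x + t • v = (1 - t) • x + t • y := by rw [hvdef, smul_sub]; module
      have hru : r (x + t • v) ≤ (1 - t) * r x + t * r y := by
        rw [hx2]; simpa [smul_eq_mul] using hconvr
      have hD : t * ((H (x + t • v) - H x) / t) = H (x + t • v) - H x := by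
        field_simp
      rw [← mul_le_mul_iff_right₀ ht0]
      nlinarith [hu, hru, hD]
    have hlim : Filter.Tendsto
        (fun t : ℝ => (inner ℝ (gf x) v : ℝ) + (H (x + t • v) - H x) / t - (inner ℝ (H' x) v : ℝ) + r y)
        (nhdsWithin 0 (Set.Ioi 0)) (nhds ((inner ℝ (gf x) v : ℝ) + (inner ℝ (H' x) v : ℝ) - (inner ℝ (H' x) v : ℝ) + r y)) := by
      exact (((tendsto_const_nhds.add (slope_tendsto H (H' x) x v (hHgrad x))).sub
        tendsto_const_nhds).add tendsto_const_nhds)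
    have : r x ≤ (inner ℝ (gf x) v : ℝ) + (inner ℝ (H' x) v : ℝ) - (inner ℝ (H' x) v : ℝ) + r y := by
      refine ge_of_tendsto hlim ?_
      filter_upwards [Ioo_mem_nhdsGT_of_mem (Set.left_mem_Ico.mpr one_pos)] with t ht
      exact key t ht
    rw [inner_neg_left]
    linarith

end Aux

/-- x is a stationary point of F = f + r (i.e. 0 ∈ ∇f(x) + ∂r(x)) iff
D_H(T(x), x) = 0, where T(x) is the full Bregman proximal mapping. -/
theorem stationary_iff_bregman_gap_zero (N : ℕ)
    (f r H : EuclideanSpace ℝ (Fin N) → ℝ)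
    (H' : EuclideanSpace ℝ (Fin N) → EuclideanSpace ℝ (Fin N))
    (gf : EuclideanSpace ℝ (Fin N) → EuclideanSpace ℝ (Fin N))
    (hr : ConvexOn ℝ Set.univ r)
    (hHstrict : StrictConvexOn ℝ Set.univ H)
    (hHgrad : ∀ x, HasGradientAt H (H' x) x)
    (hfgrad : ∀ x, HasGradientAt f (gf x) x)
    (x Tx : EuclideanSpace ℝ (Fin N))
    -- Tx minimizes u ↦ ⟨∇f(x), u - x⟩ + D_H(u, x) + r(u)
    (hT : ∀ u, (inner ℝ (gf x) (Tx - x) : ℝ) + breg H H' Tx x + r Tx ≤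
      (inner ℝ (gf x) (u - x) : ℝ) + breg H H' u x + r u) :
    (∃ v : EuclideanSpace ℝ (Fin N),
        (∀ y, r x + (inner ℝ v (y - x) : ℝ) ≤ r y) ∧ gf x + v = 0) ↔
      breg H H' Tx x = 0 := by
  simp only [breg] at hT ⊢
  exact stationary_iff_bregman_gap_zero' N f r H H' gf hr hHstrict hHgrad hfgrad x Tx hT
end

section
/- For γ ≥ 1, the sequence β_k = γ/(k+γ) satisfies (1 - β_{k+1})/β_{k+1}^γ ≤ 1/β_k^γ for all k ≥ 0. -/
/-- The sequence β_k = γ/(k+γ) satisfies (1-β_{k+1})/β_{k+1}^γ ≤ 1/β_k^γ for γ ≥ 1. -/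
theorem beta_seq_condition (γ : ℝ) (hγ : 1 ≤ γ) (β : ℕ → ℝ)
    (hβ : ∀ k : ℕ, β k = γ / ((k : ℝ) + γ)) :
    ∀ k : ℕ, (1 - β (k + 1)) / β (k + 1) ^ γ ≤ 1 / β k ^ γ := by
  intro k
  have hγ0 : (0:ℝ) < γ := lt_of_lt_of_le one_pos hγ
  set A : ℝ := (k:ℝ) + γ with hA
  set B : ℝ := (k:ℝ) + 1 + γ with hB
  have hA0 : 0 < A := by positivity
  have hB0 : 0 < B := by positivity
  have hk1 : (0:ℝ) ≤ (k:ℝ) + 1 := by positivity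
  -- key inequality: (k+1) * B^(γ-1) ≤ A^γ
  have key : ((k:ℝ)+1) * B ^ (γ - 1) ≤ A ^ γ := by
    have hw1 : (0:ℝ) ≤ 1/γ := by positivity
    have hw2 : (0:ℝ) ≤ (γ-1)/γ := div_nonneg (by linarith) hγ0.le
    have hw : 1/γ + (γ-1)/γ = 1 := by field_simp; ring
    have amgm := Real.geom_mean_le_arith_mean2_weighted hw1 hw2 hk1 hB0.le hw
    have h1 : (1/γ) * ((k:ℝ)+1) + ((γ-1)/γ) * B = A := by
      field_simp [hB, hA]; ring
    rw [h1] at amgm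
    have h2 := Real.rpow_le_rpow (by positivity) amgm hγ0.le
    rwa [Real.mul_rpow (Real.rpow_nonneg hk1 _) (Real.rpow_nonneg hB0.le _),
      ← Real.rpow_mul hk1, ← Real.rpow_mul hB0.le,
      one_div_mul_cancel hγ0.ne', div_mul_cancel₀ _ hγ0.ne',
      Real.rpow_one] at h2
  have hβk : β k ^ γ = γ ^ γ / A ^ γ := by
    rw [hβ, Real.div_rpow hγ0.le hA0.le]
  have hβk1 : β (k+1) = γ / B := by
    rw [hβ]; push_cast; rw [hB]
  have hβk1p : β (k+1) ^ γ = γ ^ γ / B ^ γ := by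
    rw [hβk1, Real.div_rpow hγ0.le hB0.le]
  have h1mb : 1 - β (k+1) = ((k:ℝ)+1) / B := by
    rw [hβk1, hB]; field_simp; ring
  have hγγ : (0:ℝ) < γ ^ γ := Real.rpow_pos_of_pos hγ0 _
  have hBγ : (0:ℝ) < B ^ γ := Real.rpow_pos_of_pos hB0 _
  have hAγ : (0:ℝ) < A ^ γ := Real.rpow_pos_of_pos hA0 _
  have hBsplit : B ^ γ = B ^ (γ - 1) * B := by
    rw [← Real.rpow_add_one hB0.ne' (γ-1)]; ring_nf
  rw [h1mb, hβk1p, hβk]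
  rw [div_le_div_iff₀ (by positivity) (by positivity), one_mul,
    div_mul_div_comm, div_le_div_iff₀ (by positivity) hBγ, hBsplit]
  nlinarith [mul_le_mul_of_nonneg_left key (mul_pos hγγ hB0).le, hγγ, hB0,
    Real.rpow_pos_of_pos hB0 (γ-1)]
end

section
/- Relative smoothness for the Poisson inverse problem: for a nonnegative matrix A ∈ ℝ₊^{M×N} and b ∈ ℝ₊^M, the coordinate function f_j(x_j) = D_KL(b, Ax) (viewed as a function of the j-th coordinate with others fixed, on the domain where all ⟨a_i, x⟩ > 0) satisfies f_j''(x_j) ≤ (Σ_{i=1}^M b_i)·h''(x_j), where h(t) = -log t is the Burg entropy; hence (f_j, h) is relatively smooth with any constant L_j ≥ ‖b‖₁. -/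
open Finset in
/-- Coordinate function of the Poisson inverse objective x ↦ D_KL(b, Ax), as a function
of the j-th coordinate with the others fixed. -/
noncomputable def fjPoisson (M N : ℕ) (A : Matrix (Fin M) (Fin N) ℝ)
    (b : Fin M → ℝ) (x : Fin N → ℝ) (j : Fin N) (t : ℝ) : ℝ :=
  ∑ i, (b i * Real.log (b i / ∑ k, A i k * Function.update x j t k) +
    (∑ k, A i k * Function.update x j t k) - b i)

/-- Relative smoothness for the Poisson inverse problem: fⱼ''(xⱼ) ≤ (Σᵢ bᵢ)·h''(xⱼ)
with h the Burg entropy (h''(t) = 1/t²); hence for any L ≥ ‖b‖₁ the function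
L·h - fⱼ is convex on the feasible domain. -/
theorem poisson_relative_smooth (M N : ℕ) (A : Matrix (Fin M) (Fin N) ℝ)
    (b : Fin M → ℝ) (x : Fin N → ℝ) (j : Fin N)
    (hA : ∀ i k, 0 ≤ A i k) (hb : ∀ i, 0 ≤ b i) (hx : ∀ k, 0 ≤ x k)
    (hxj : 0 < x j) (hdot : ∀ i, 0 < ∑ k, A i k * x k) :
    deriv (deriv (fjPoisson M N A b x j)) (x j) ≤ (∑ i, b i) * (1 / (x j) ^ 2) ∧
      ∀ L : ℝ, (∑ i, b i) ≤ L →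
        ConvexOn ℝ {t : ℝ | 0 < t ∧ ∀ i, 0 < ∑ k, A i k * Function.update x j t k}
          (fun t => L * (-Real.log t) - fjPoisson M N A b x j t) := by
  classical
  set c : Fin M → ℝ := fun i => ∑ k ∈ Finset.univ \ {j}, A i k * x k with hc
  have hcnn : ∀ i, 0 ≤ c i := fun i =>
    Finset.sum_nonneg fun k _ => mul_nonneg (hA i k) (hx k)
  -- the inner product as an affine function of t
  have hS : ∀ (i : Fin M) (t : ℝ),
      (∑ k, A i k * Function.update x j t k) = A i j * t + c i := by
    intro i t
    have h1 : (fun k => A i k * Function.update x j t k) =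
        Function.update (fun k => A i k * x k) j (A i j * t) := by
      funext k
      rcases eq_or_ne k j with rfl | hk
      · simp
      · simp [Function.update_of_ne hk]
    rw [h1, Finset.sum_update_of_mem (Finset.mem_univ j)]
  have hdotc : ∀ i, 0 < A i j * x j + c i := by
    intro i
    have h := hdot i
    rwa [show (∑ k, A i k * x k) = A i j * x j + c i from by
      rw [← hS i (x j)]; simp [Function.update_eq_self]] at h
  -- positivity of all inner products on (0, ∞)
  have hpos : ∀ t : ℝ, 0 < t → ∀ i, 0 < A i j * t + c i := by
    intro t ht i
    rcases (hA i j).lt_or_eq with hAij | hAij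
    · nlinarith [mul_pos hAij ht, hcnn i]
    · have h1 := hdotc i
      rw [← hAij] at h1 ⊢
      simpa using (by simpa using h1 : 0 < c i)
  -- the domain is just (0, ∞)
  have hDeq : {t : ℝ | 0 < t ∧ ∀ i, 0 < ∑ k, A i k * Function.update x j t k}
      = Set.Ioi (0 : ℝ) := by
    ext t
    simp only [Set.mem_setOf_eq, Set.mem_Ioi, hS]
    exact ⟨fun h => h.1, fun h => ⟨h, fun i => hpos t h i⟩⟩
  -- explicit smooth versions of f and its derivatives
  set g : ℝ → ℝ := fun t => ∑ i,
    (b i * Real.log (b i) - b i * Real.log (A i j * t + c i) + (A i j * t + c i) - b i)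
    with hgdef
  set g1 : ℝ → ℝ := fun t => ∑ i, (A i j - b i * (A i j / (A i j * t + c i))) with hg1def
  set g2 : ℝ → ℝ := fun t => ∑ i, b i * ((A i j) ^ 2 / (A i j * t + c i) ^ 2) with hg2def
  have hfg : ∀ t : ℝ, (∀ i, 0 < A i j * t + c i) → fjPoisson M N A b x j t = g t := by
    intro t ht
    rw [hgdef]
    simp only [fjPoisson, hS]
    refine Finset.sum_congr rfl fun i _ => ?_
    rcases (hb i).lt_or_eq with hbi | hbi
    · rw [Real.log_div hbi.ne' (ht i).ne']; ring
    · rw [← hbi]; simp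
  have haff : ∀ (i : Fin M) (t : ℝ), HasDerivAt (fun t : ℝ => A i j * t + c i) (A i j) t := by
    intro i t
    simpa using ((hasDerivAt_id t).const_mul (A i j)).add_const (c i)
  have hgd : ∀ t : ℝ, (∀ i, 0 < A i j * t + c i) → HasDerivAt g (g1 t) t := by
    intro t ht
    rw [hgdef, hg1def]
    apply HasDerivAt.fun_sum
    intro i _
    have hlog : HasDerivAt (fun t : ℝ => Real.log (A i j * t + c i))
        (A i j / (A i j * t + c i)) t := (haff i t).log (ht i).ne'
    have h2 := (((hasDerivAt_const t (b i * Real.log (b i))).fun_sub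
      (hlog.const_mul (b i))).fun_add (haff i t)).sub_const (b i)
    convert h2 using 1
    ring
  have hg1d : ∀ t : ℝ, (∀ i, 0 < A i j * t + c i) → HasDerivAt g1 (g2 t) t := by
    intro t ht
    rw [hg1def, hg2def]
    apply HasDerivAt.fun_sum
    intro i _
    have hdiv : HasDerivAt (fun t : ℝ => A i j / (A i j * t + c i))
        ((0 * (A i j * t + c i) - A i j * A i j) / (A i j * t + c i) ^ 2) t :=
      (hasDerivAt_const t (A i j)).div (haff i t) (ht i).ne'
    have h2 := (hasDerivAt_const t (A i j)).fun_sub (hdiv.const_mul (b i))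
    convert h2 using 1
    ring
  -- open set on which everything agrees
  set U : Set ℝ := {t : ℝ | ∀ i, 0 < A i j * t + c i} with hUdef
  have hUopen : IsOpen U := by
    have : U = ⋂ i, {t : ℝ | 0 < A i j * t + c i} := by
      ext t; simp [hUdef, Set.mem_iInter]
    rw [this]
    exact isOpen_iInter_of_finite fun i =>
      isOpen_lt continuous_const (by fun_prop)
  have hmemU : ∀ t : ℝ, (∀ i, 0 < A i j * t + c i) → t ∈ U := fun t ht => ht
  have heq : ∀ t ∈ U, fjPoisson M N A b x j =ᶠ[nhds t] g := fun t ht =>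
    Filter.eventuallyEq_of_mem (hUopen.mem_nhds ht) fun s hs => hfg s hs
  have hderiv_fj : ∀ t ∈ U, deriv (fjPoisson M N A b x j) t = g1 t := by
    intro t ht
    rw [(heq t ht).deriv_eq, (hgd t ht).deriv]
  have hderiv2_fj : ∀ t ∈ U, deriv (deriv (fjPoisson M N A b x j)) t = g2 t := by
    intro t ht
    have hev : deriv (fjPoisson M N A b x j) =ᶠ[nhds t] g1 :=
      Filter.eventuallyEq_of_mem (hUopen.mem_nhds ht) fun s hs => hderiv_fj s hs
    rw [hev.deriv_eq, (hg1d t ht).deriv]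
  -- key bound on g2
  have hkey : ∀ t : ℝ, 0 < t → g2 t ≤ (∑ i, b i) * (1 / t ^ 2) := by
    intro t ht
    rw [hg2def]
    have h1 : ∀ i ∈ Finset.univ, b i * ((A i j) ^ 2 / (A i j * t + c i) ^ 2)
        ≤ b i * (1 / t ^ 2) := by
      intro i _
      have hsi := hpos t ht i
      have h2 : (A i j) ^ 2 / (A i j * t + c i) ^ 2 ≤ 1 / t ^ 2 := by
        rw [div_le_div_iff₀ (by positivity) (by positivity)]
        nlinarith [mul_nonneg (mul_nonneg (hA i j) ht.le) (hcnn i), sq_nonneg (c i)]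
      exact mul_le_mul_of_nonneg_left h2 (hb i)
    calc (∑ i, b i * ((A i j) ^ 2 / (A i j * t + c i) ^ 2))
        ≤ ∑ i, b i * (1 / t ^ 2) := Finset.sum_le_sum h1
      _ = (∑ i, b i) * (1 / t ^ 2) := by rw [Finset.sum_mul]
  constructor
  · rw [hderiv2_fj (x j) (hmemU (x j) hdotc)]
    exact hkey (x j) hxj
  · intro L hL
    rw [hDeq]
    -- derivatives of the reference function minus objective
    set φ1 : ℝ → ℝ := fun t => L * (-t⁻¹) - g1 t with hφ1def
    have hφd : ∀ t ∈ Set.Ioi (0 : ℝ),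
        HasDerivAt (fun t => L * (-Real.log t) - fjPoisson M N A b x j t) (φ1 t) t := by
      intro t ht
      have ht' : (0 : ℝ) < t := ht
      have h1 : HasDerivAt (fun t : ℝ => L * (-Real.log t)) (L * (-t⁻¹)) t :=
        (Real.hasDerivAt_log ht'.ne').neg.const_mul L
      have h2 : HasDerivAt (fun t => L * (-Real.log t) - g t) (φ1 t) t :=
        h1.sub (hgd t (hpos t ht'))
      refine h2.congr_of_eventuallyEq ?_
      refine Filter.eventuallyEq_of_mem (isOpen_Ioi.mem_nhds ht) fun s hs => ?_
      have : (0 : ℝ) < s := hs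
      rw [hfg s (hpos s this)]
    have hφ1d : ∀ t ∈ Set.Ioi (0 : ℝ),
        HasDerivAt φ1 (L * (t ^ 2)⁻¹ - g2 t) t := by
      intro t ht
      have ht' : (0 : ℝ) < t := ht
      have hinv : HasDerivAt (fun t : ℝ => -t⁻¹) ((t ^ 2)⁻¹) t := by
        simpa using (hasDerivAt_inv ht'.ne').fun_neg
      rw [hφ1def]
      exact (hinv.const_mul L).sub (hg1d t (hpos t ht'))
    have hφderiv : ∀ t ∈ Set.Ioi (0 : ℝ),
        deriv (fun t => L * (-Real.log t) - fjPoisson M N A b x j t) t = φ1 t :=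
      fun t ht => (hφd t ht).deriv
    have hφev : ∀ t ∈ Set.Ioi (0 : ℝ),
        deriv (fun t => L * (-Real.log t) - fjPoisson M N A b x j t) =ᶠ[nhds t] φ1 :=
      fun t ht => Filter.eventuallyEq_of_mem (isOpen_Ioi.mem_nhds ht)
        fun s hs => hφderiv s hs
    refine convexOn_of_deriv2_nonneg (convex_Ioi 0) ?_ ?_ ?_ ?_
    · exact fun t ht => (hφd t ht).differentiableAt.continuousAt.continuousWithinAt
    · rw [interior_Ioi]
      exact fun t ht => (hφd t ht).differentiableAt.differentiableWithinAt
    · rw [interior_Ioi]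
      intro t ht
      exact (((hφ1d t ht).differentiableAt).congr_of_eventuallyEq
        (hφev t ht)).differentiableWithinAt
    · rw [interior_Ioi]
      intro t ht
      have ht' : (0 : ℝ) < t := ht
      have h1 : deriv^[2] (fun t => L * (-Real.log t) - fjPoisson M N A b x j t) t
          = L * (t ^ 2)⁻¹ - g2 t := by
        show deriv (deriv _) t = _
        rw [(hφev t ht).deriv_eq, (hφ1d t ht).deriv]
      rw [h1]
      have h2 := hkey t ht'
      have h3 : (∑ i, b i) * (1 / t ^ 2) ≤ L * (t ^ 2)⁻¹ := by
        rw [one_div]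
        exact mul_le_mul_of_nonneg_right hL (by positivity)
      linarith
end

section
/- Relative smoothness for relative-entropy nonnegative regression: for a nonnegative matrix A ∈ ℝ₊^{M×N} and b ∈ ℝ₊₊^M, the coordinate function f_j(x_j) = D_KL(Ax, b) satisfies f_j''(x_j) = Σ_{i=1}^M a_{ij}²/⟨a_i,x⟩ ≤ (Σ_{i=1}^M a_{ij})·(1/x_j), where 1/x_j = h''(x_j) for the Boltzmann–Shannon entropy h(t) = t·log t; hence (f_j, h) is relatively smooth with any constant L_j ≥ Σ_{i=1}^M a_{ij}. -/
open Finset in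
/-- Coordinate function of the relative-entropy regression objective x ↦ D_KL(Ax, b),
as a function of the j-th coordinate with the others fixed. -/
noncomputable def fjRE (M N : ℕ) (A : Matrix (Fin M) (Fin N) ℝ)
    (b : Fin M → ℝ) (x : Fin N → ℝ) (j : Fin N) (t : ℝ) : ℝ :=
  ∑ i, ((∑ k, A i k * Function.update x j t k) *
      Real.log ((∑ k, A i k * Function.update x j t k) / b i) +
    b i - ∑ k, A i k * Function.update x j t k)

open Finset in
/-- Relative smoothness for relative-entropy nonnegative regression:
fⱼ''(xⱼ) = Σᵢ aᵢⱼ²/⟨aᵢ,x⟩ ≤ (Σᵢ aᵢⱼ)·(1/xⱼ) = (Σᵢ aᵢⱼ)·h''(xⱼ) with h(t) = t log t;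
hence for any L ≥ Σᵢ aᵢⱼ the function L·h - fⱼ is convex on the feasible domain. -/
theorem relative_entropy_relative_smooth (M N : ℕ) (A : Matrix (Fin M) (Fin N) ℝ)
    (b : Fin M → ℝ) (x : Fin N → ℝ) (j : Fin N)
    (hA : ∀ i k, 0 ≤ A i k) (hb : ∀ i, 0 < b i) (hx : ∀ k, 0 ≤ x k)
    (hxj : 0 < x j) (hdot : ∀ i, 0 < ∑ k, A i k * x k) :
    deriv (deriv (fjRE M N A b x j)) (x j) = (∑ i, (A i j) ^ 2 / ∑ k, A i k * x k) ∧
      (∑ i, (A i j) ^ 2 / ∑ k, A i k * x k) ≤ (∑ i, A i j) * (1 / x j) ∧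
      ∀ L : ℝ, (∑ i, A i j) ≤ L →
        ConvexOn ℝ {t : ℝ | 0 < t ∧ ∀ i, 0 < ∑ k, A i k * Function.update x j t k}
          (fun t => L * (t * Real.log t) - fjRE M N A b x j t) := by
  classical
  set c : Fin M → ℝ := fun i => (∑ k, A i k * x k) - A i j * x j with hc
  have hsum : ∀ (i : Fin M) (t : ℝ),
      (∑ k, A i k * Function.update x j t k) = c i + A i j * t := by
    intro i t
    have h1 : ∑ k, A i k * Function.update x j t k
        = A i j * t + ∑ k ∈ univ.erase j, A i k * x k := by
      rw [← Finset.add_sum_erase _ _ (mem_univ j)]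
      simp only [Function.update_self]
      congr 1
      refine Finset.sum_congr rfl fun k hk => ?_
      rw [Function.update_of_ne (Finset.ne_of_mem_erase hk)]
    have h2 : ∑ k, A i k * x k = A i j * x j + ∑ k ∈ univ.erase j, A i k * x k := by
      rw [← Finset.add_sum_erase _ _ (mem_univ j)]
    rw [h1]; simp only [hc]; linarith
  have hc0 : ∀ i, 0 ≤ c i := by
    intro i
    have h : A i j * x j ≤ ∑ k, A i k * x k := Finset.single_le_sum
      (fun k _ => mul_nonneg (hA i k) (hx k)) (Finset.mem_univ j)
    simp only [hc]; linarith
  have hF : fjRE M N A b x j = fun t => ∑ i,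
      ((c i + A i j * t) * Real.log ((c i + A i j * t) / b i) + b i - (c i + A i j * t)) := by
    funext t; simp only [fjRE, hsum]
  have haff : ∀ (i : Fin M) (t : ℝ),
      HasDerivAt (fun s : ℝ => c i + A i j * s) (A i j) t := by
    intro i t
    simpa using ((hasDerivAt_id t).const_mul (A i j)).const_add (c i)
  have hterm : ∀ (i : Fin M) (t : ℝ), 0 < c i + A i j * t →
      HasDerivAt (fun s => (c i + A i j * s) * Real.log ((c i + A i j * s) / b i)
        + b i - (c i + A i j * s))
        (A i j * (Real.log (c i + A i j * t) - Real.log (b i))) t := by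
    intro i t ht
    have hrw : (fun s => (c i + A i j * s) * Real.log ((c i + A i j * s) / b i)
        + b i - (c i + A i j * s))
        = fun s => ((c i + A i j * s) * Real.log (c i + A i j * s)
          - Real.log (b i) * (c i + A i j * s) + b i - (c i + A i j * s)) := by
      funext s
      rcases eq_or_ne (c i + A i j * s) 0 with h | h
      · simp [h]
      · rw [Real.log_div h (hb i).ne']; ring
    rw [hrw]
    have h1 : HasDerivAt (fun s => (c i + A i j * s) * Real.log (c i + A i j * s))
        ((Real.log (c i + A i j * t) + 1) * A i j) t :=
      (Real.hasDerivAt_mul_log ht.ne').comp (h₂ := fun y => y * Real.log y) t (haff i t)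
    have h2 := ((h1.sub ((haff i t).const_mul (Real.log (b i)))).add_const (b i)).sub (haff i t)
    exact h2.congr_deriv (by ring)
  set D1 : ℝ → ℝ := fun t => ∑ i, A i j * (Real.log (c i + A i j * t) - Real.log (b i))
    with hD1
  have hd1 : ∀ t, (∀ i, 0 < c i + A i j * t) → HasDerivAt (fjRE M N A b x j) (D1 t) t := by
    intro t ht
    rw [hF]
    exact HasDerivAt.fun_sum fun i _ => hterm i t (ht i)
  have hd2 : ∀ t, (∀ i, 0 < c i + A i j * t) →
      HasDerivAt D1 (∑ i, (A i j) ^ 2 / (c i + A i j * t)) t := by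
    intro t ht
    refine HasDerivAt.fun_sum fun i _ => ?_
    have hlog : HasDerivAt (fun s => Real.log (c i + A i j * s))
        (A i j / (c i + A i j * t)) t := (haff i t).log (ht i).ne'
    have h2 := (hlog.sub_const (Real.log (b i))).const_mul (A i j)
    exact h2.congr_deriv (by ring)
  have hUopen : IsOpen {t : ℝ | ∀ i, 0 < c i + A i j * t} := by
    have heq : {t : ℝ | ∀ i, 0 < c i + A i j * t}
        = ⋂ i, {t : ℝ | 0 < c i + A i j * t} := by
      ext t; simp [Set.mem_iInter]
    rw [heq]
    exact isOpen_iInter_of_finite fun i => isOpen_lt continuous_const (by continuity)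
  have hmem : ∀ i, 0 < c i + A i j * (x j) := by
    intro i; have := hdot i; simp only [hc]; linarith
  have hEv : deriv (fjRE M N A b x j) =ᶠ[nhds (x j)] D1 :=
    Filter.eventually_of_mem (hUopen.mem_nhds hmem) fun s hs => (hd1 s hs).deriv
  have hdd : HasDerivAt (deriv (fjRE M N A b x j))
      (∑ i, (A i j) ^ 2 / (c i + A i j * x j)) (x j) :=
    (hd2 (x j) hmem).congr_of_eventuallyEq hEv
  have hcx : ∀ i, c i + A i j * x j = ∑ k, A i k * x k := by
    intro i; simp only [hc]; ring
  have part1 : deriv (deriv (fjRE M N A b x j)) (x j)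
      = ∑ i, (A i j) ^ 2 / ∑ k, A i k * x k := by
    rw [hdd.deriv]
    exact Finset.sum_congr rfl fun i _ => by rw [hcx i]
  have hbound : ∀ t : ℝ, 0 < t → (∀ i, 0 < c i + A i j * t) →
      ∑ i, (A i j) ^ 2 / (c i + A i j * t) ≤ (∑ i, A i j) * (1 / t) := by
    intro t ht hpos
    rw [Finset.sum_mul]
    refine Finset.sum_le_sum fun i _ => ?_
    rcases eq_or_lt_of_le (hA i j) with h | h
    · simp [← h]
    · have h1 : A i j * t ≤ c i + A i j * t := by linarith [hc0 i]
      calc (A i j) ^ 2 / (c i + A i j * t) ≤ (A i j) ^ 2 / (A i j * t) := by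
            gcongr
        _ = A i j * (1 / t) := by
            rw [sq, mul_div_mul_left _ _ h.ne', ← mul_one_div]
  have part2 : (∑ i, (A i j) ^ 2 / ∑ k, A i k * x k) ≤ (∑ i, A i j) * (1 / x j) := by
    have hb2 := hbound (x j) hxj hmem
    calc (∑ i, (A i j) ^ 2 / ∑ k, A i k * x k)
        = ∑ i, (A i j) ^ 2 / (c i + A i j * x j) :=
          Finset.sum_congr rfl fun i _ => by rw [hcx i]
      _ ≤ _ := hb2
  refine ⟨part1, part2, ?_⟩
  intro L hL
  have hSeq : {t : ℝ | 0 < t ∧ ∀ i, 0 < ∑ k, A i k * Function.update x j t k}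
      = {t : ℝ | 0 < t ∧ ∀ i, 0 < c i + A i j * t} := by
    ext t; simp only [Set.mem_setOf_eq, hsum]
  rw [hSeq]
  set S : Set ℝ := {t : ℝ | 0 < t ∧ ∀ i, 0 < c i + A i j * t} with hS
  have hSopen : IsOpen S := by
    have heq : S = Set.Ioi 0 ∩ {t | ∀ i, 0 < c i + A i j * t} := by
      ext t; simp [hS, Set.mem_Ioi]
    rw [heq]; exact isOpen_Ioi.inter hUopen
  have hSconv : Convex ℝ S := by
    intro t1 ht1 t2 ht2 a b' ha hb' hab
    have key : ∀ p q : ℝ, 0 < p → 0 < q → 0 < a * p + b' * q := by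
      intro p q hp hq
      rcases eq_or_lt_of_le ha with h | h
      · rw [← h] at hab ⊢; simp only [zero_add] at hab; simp [hab, hq]
      · nlinarith [mul_nonneg hb' hq.le]
    constructor
    · simpa using key t1 t2 ht1.1 ht2.1
    · intro i
      have hk := key _ _ (ht1.2 i) (ht2.2 i)
      have heq : c i + A i j * (a * t1 + b' * t2)
          = a * (c i + A i j * t1) + b' * (c i + A i j * t2) := by
        linear_combination (-(c i)) * hab
      simp only [smul_eq_mul]
      rw [heq]; exact hk
  set g : ℝ → ℝ := fun t => L * (t * Real.log t) - fjRE M N A b x j t with hg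
  have hg1 : ∀ t ∈ S, HasDerivAt g (L * (Real.log t + 1) - D1 t) t := by
    intro t ht
    exact ((Real.hasDerivAt_mul_log ht.1.ne').const_mul L).sub (hd1 t ht.2)
  set G1 : ℝ → ℝ := fun t => L * (Real.log t + 1) - D1 t with hG1
  have hg2 : ∀ t ∈ S, HasDerivAt G1
      (L * t⁻¹ - ∑ i, (A i j) ^ 2 / (c i + A i j * t)) t := by
    intro t ht
    have hlog : HasDerivAt (fun s : ℝ => L * (Real.log s + 1)) (L * t⁻¹) t :=
      ((Real.hasDerivAt_log ht.1.ne').add_const 1).const_mul L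
    exact hlog.sub (hd2 t ht.2)
  have hEvg : ∀ t ∈ S, deriv g =ᶠ[nhds t] G1 := fun t ht =>
    Filter.eventually_of_mem (hSopen.mem_nhds ht) fun s hs => (hg1 s hs).deriv
  have hdg : ∀ t ∈ S, HasDerivAt (deriv g)
      (L * t⁻¹ - ∑ i, (A i j) ^ 2 / (c i + A i j * t)) t := fun t ht =>
    (hg2 t ht).congr_of_eventuallyEq (hEvg t ht)
  have hint : interior S = S := hSopen.interior_eq
  refine convexOn_of_deriv2_nonneg hSconv ?_ ?_ ?_ ?_
  · exact fun t ht => (hg1 t ht).differentiableAt.continuousAt.continuousWithinAt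
  · rw [hint]; exact fun t ht => (hg1 t ht).differentiableAt.differentiableWithinAt
  · rw [hint]; exact fun t ht => (hdg t ht).differentiableAt.differentiableWithinAt
  · rw [hint]
    intro t ht
    have h2 : deriv^[2] g t = L * t⁻¹ - ∑ i, (A i j) ^ 2 / (c i + A i j * t) := by
      show deriv (deriv g) t = _
      exact (hdg t ht).deriv
    rw [h2]
    have hb3 := hbound t ht.1 ht.2
    have hLt : (∑ i, A i j) * (1 / t) ≤ L * (1 / t) :=
      mul_le_mul_of_nonneg_right hL (one_div_pos.mpr ht.1).le
    rw [one_div] at hLt hb3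
    linarith
end
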